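/- Let 1 ≤ p ≤ q < ∞. The identity embedding I : ℓ^p → ℓ^q of real sequence spaces has operator norm 1 and is maximally non-compact: its ball measure of non-compactness equals 1. Concretely, for every ρ ∈ (0,1), every m ∈ ℕ and all y^1,…,y^m ∈ ℓ^q, there exists x ∈ ℓ^p with ‖x‖_{ℓ^p} ≤ 1 (in fact x may be taken to be a standard basis vector e^j) such that ‖x − y^k‖_{ℓ^q} > ρ for every k = 1,…,m; hence the closed unit ball of ℓ^p cannot be covered by finitely many balls in ℓ^q of radius ρ < 1. -/

import Mathlib

open scoped ENNReal NNReal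

/-- The `ℓ^p` (quasi)norm of a real sequence, `(∑_j |x_j|^p)^{1/p}`, valued in `ℝ≥0∞`. -/
noncomputable def seqLpNorm (p : ℝ) (x : ℕ → ℝ) : ℝ≥0∞ :=
  (∑' j, (‖x j‖₊ : ℝ≥0∞) ^ p) ^ (1 / p)

lemma seqLpNorm_basis (r : ℝ) (hr : 0 < r) (j : ℕ) :
    seqLpNorm r (fun i => if i = j then 1 else 0) = 1 := by
  unfold seqLpNorm
  have h : (∑' i, (‖(if i = j then (1:ℝ) else 0)‖₊ : ℝ≥0∞) ^ r) = 1 := by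
    rw [tsum_eq_single j]
    · simp
    · intro i hij
      simp [hij, ENNReal.zero_rpow_of_pos hr]
  rw [h, ENNReal.one_rpow]

lemma seqLpNorm_single_le (r : ℝ) (hr : 0 < r) (f : ℕ → ℝ) (j : ℕ) :
    (‖f j‖₊ : ℝ≥0∞) ≤ seqLpNorm r f := by
  have h1 : ((‖f j‖₊ : ℝ≥0∞) ^ r) ≤ ∑' i, (‖f i‖₊ : ℝ≥0∞) ^ r := ENNReal.le_tsum j
  calc (‖f j‖₊ : ℝ≥0∞) = ((‖f j‖₊ : ℝ≥0∞) ^ r) ^ (1/r) := by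
        rw [← ENNReal.rpow_mul, mul_one_div_cancel hr.ne', ENNReal.rpow_one]
    _ ≤ _ := ENNReal.rpow_le_rpow h1 (by positivity)

/-- For `1 ≤ p ≤ q < ∞`, the identity embedding `I : ℓ^p → ℓ^q` has norm `1`
and is maximally non-compact: it maps the unit ball into the unit ball, the standard basis
vector `e^0` has norm one in both spaces, and for every `ρ ∈ (0,1)`, `m ∈ ℕ` and
`y^1,…,y^m ∈ ℓ^q` there is a standard basis vector `x = e^j` (so `‖x‖_{ℓ^p} ≤ 1`)
with `‖x − y^k‖_{ℓ^q} > ρ` for all `k`. Hence the unit ball of `ℓ^p` cannot be covered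
by finitely many balls in `ℓ^q` of radius `ρ < 1`, and the ball measure of
non-compactness of `I` equals `1`. -/
theorem lp_into_lq_maximally_noncompact (p q : ℝ) (hp : 1 ≤ p) (hpq : p ≤ q) :
    (∀ x : ℕ → ℝ, seqLpNorm p x ≤ 1 → seqLpNorm q x ≤ 1) ∧
    (seqLpNorm p (fun i => if i = 0 then 1 else 0) = 1 ∧
      seqLpNorm q (fun i => if i = 0 then 1 else 0) = 1) ∧
    (∀ ρ : ℝ≥0∞, 0 < ρ → ρ < 1 →
      ∀ (m : ℕ) (y : Fin m → ℕ → ℝ), (∀ k, seqLpNorm q (y k) < ∞) →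
        ∃ x : ℕ → ℝ, seqLpNorm p x ≤ 1 ∧
          (∃ j : ℕ, x = fun i => if i = j then 1 else 0) ∧
          ∀ k, ρ < seqLpNorm q (fun i => x i - y k i)) := by
  have hp0 : (0:ℝ) < p := lt_of_lt_of_le one_pos hp
  have hq0 : (0:ℝ) < q := lt_of_lt_of_le hp0 hpq
  refine ⟨?_, ⟨seqLpNorm_basis p hp0 0, seqLpNorm_basis q hq0 0⟩, ?_⟩
  · -- norm bound
    intro x hx
    unfold seqLpNorm at hx ⊢
    have hS : ∑' j, (‖x j‖₊ : ℝ≥0∞) ^ p ≤ 1 := by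
      have h := ENNReal.rpow_le_rpow hx hp0.le
      rwa [← ENNReal.rpow_mul, one_div_mul_cancel hp0.ne', ENNReal.rpow_one,
        ENNReal.one_rpow] at h
    have hterm : ∀ j, (‖x j‖₊ : ℝ≥0∞) ≤ 1 := by
      intro j
      have h1 : (‖x j‖₊ : ℝ≥0∞) ^ p ≤ 1 := le_trans (ENNReal.le_tsum j) hS
      have h2 := ENNReal.rpow_le_rpow h1 (by positivity : (0:ℝ) ≤ 1/p)
      rwa [← ENNReal.rpow_mul, mul_one_div_cancel hp0.ne', ENNReal.rpow_one,
        ENNReal.one_rpow] at h2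
    have hq : ∑' j, (‖x j‖₊ : ℝ≥0∞) ^ q ≤ 1 := by
      refine le_trans (ENNReal.tsum_le_tsum fun j => ?_) hS
      exact ENNReal.rpow_le_rpow_of_exponent_ge (hterm j) hpq
    calc (∑' j, (‖x j‖₊ : ℝ≥0∞) ^ q) ^ (1/q) ≤ 1 ^ (1/q) :=
          ENNReal.rpow_le_rpow hq (by positivity)
      _ = 1 := ENNReal.one_rpow _
  · -- non-compactness
    intro ρ hρ0 hρ1 m y hy
    set t : ℝ := ρ.toReal with ht
    have hρtop : ρ ≠ ∞ := (lt_of_lt_of_le hρ1 le_top).ne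
    have ht1 : t < 1 := by
      rw [ht]
      exact ENNReal.toReal_lt_of_lt_ofReal (by simpa using hρ1)
    have ht0 : 0 ≤ t := ENNReal.toReal_nonneg
    -- each y k tends to 0
    have htend : ∀ k, Filter.Tendsto (fun j => |y k j|) Filter.atTop (nhds 0) := by
      intro k
      have hfin : (∑' j, (‖y k j‖₊ : ℝ≥0∞) ^ q) ≠ ∞ := by
        intro hcon
        have : seqLpNorm q (y k) = ∞ := by
          unfold seqLpNorm
          rw [hcon]
          exact ENNReal.top_rpow_of_pos (by positivity)
        exact (hy k).ne this
      have h1 : Filter.Tendsto (fun j => (‖y k j‖₊ : ℝ≥0∞) ^ q) Filter.atTop (nhds 0) :=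
        ENNReal.tendsto_atTop_zero_of_tsum_ne_top hfin
      have h2 : Filter.Tendsto (fun j => ((‖y k j‖₊ : ℝ≥0∞) ^ q) ^ (1/q)) Filter.atTop
          (nhds (0 ^ (1/q))) :=
        (ENNReal.continuous_rpow_const.tendsto 0).comp h1
      have h3 : Filter.Tendsto (fun j => (‖y k j‖₊ : ℝ≥0∞)) Filter.atTop (nhds 0) := by
        have hz : (0:ℝ≥0∞) ^ (1/q) = 0 := ENNReal.zero_rpow_of_pos (by positivity)
        have heq : (fun j => ((‖y k j‖₊ : ℝ≥0∞) ^ q) ^ (1/q)) =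
            fun j => (‖y k j‖₊ : ℝ≥0∞) := by
          funext j
          rw [← ENNReal.rpow_mul, mul_one_div_cancel hq0.ne', ENNReal.rpow_one]
        rw [heq, hz] at h2
        exact h2
      have h4 := (ENNReal.tendsto_toReal ENNReal.zero_ne_top).comp h3
      exact h4.congr fun j => by simp [Real.norm_eq_abs]
    -- eventually all |y k j| < (1 - t)/2
    have hev : ∀ᶠ j in Filter.atTop, ∀ k, |y k j| < (1 - t)/2 := by
      rw [Filter.eventually_all]
      intro k
      have := (htend k).eventually (eventually_lt_nhds (by linarith : (0:ℝ) < (1-t)/2))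
      exact this
    obtain ⟨j, hj⟩ := hev.exists
    refine ⟨fun i => if i = j then 1 else 0, (seqLpNorm_basis p hp0 j).le, ⟨j, rfl⟩, ?_⟩
    intro k
    have hlow : (‖(if j = j then (1:ℝ) else 0) - y k j‖₊ : ℝ≥0∞) ≤
        seqLpNorm q (fun i => (if i = j then (1:ℝ) else 0) - y k i) :=
      seqLpNorm_single_le q hq0 _ j
    have habs : t < |1 - y k j| := by
      have := hj k
      have h1 : 1 - |y k j| ≤ |1 - y k j| := by
        have := abs_sub_abs_le_abs_sub (1:ℝ) (y k j)
        simpa using this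
      linarith
    have hcoe : ρ < (‖(1:ℝ) - y k j‖₊ : ℝ≥0∞) := by
      rw [← ENNReal.ofReal_toReal hρtop, ← enorm_eq_nnnorm ((1:ℝ) - y k j), ← ofReal_norm]
      exact ENNReal.ofReal_lt_ofReal_iff (by rw [Real.norm_eq_abs]; linarith : (0:ℝ) < ‖(1:ℝ) - y k j‖) |>.mpr
        (by simpa [Real.norm_eq_abs] using habs)
    calc ρ < (‖(1:ℝ) - y k j‖₊ : ℝ≥0∞) := hcoe
      _ = (‖(if j = j then (1:ℝ) else 0) - y k j‖₊ : ℝ≥0∞) := by simp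
      _ ≤ _ := hlow
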